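/- Let G be a double-ordered graph, and let H be any magical double-ordered graph on the same vertex set with the same orders containing all edges of G. If x₁, …, x_r is a mountain-path in G with x₁ <₂ x_r, then x₁x_i ∈ E(H) for every i > 1; in particular x₁x_r ∈ E(H). -/
import Mathlib


/-- If `H` is a magical double-ordered graph containing all edges of `G`,
and `x 0, …, x (r+1)` is a mountain-path in `G` with `x 0 <₂ x (r+1)`, then `x 0` is
adjacent in `H` to every later vertex of the path; in particular to `x (r+1)`. -/
theorem magical_adj_of_mountainPath {V : Type*} (G H : SimpleGraph V)
    (lt1 lt2 : V → V → Prop)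
    [IsStrictTotalOrder V lt1] [IsStrictTotalOrder V lt2]
    (hmagH : ∀ a b c : V, lt1 a b → lt1 b c → H.Adj a b → H.Adj b c → ¬ H.Adj a c →
      lt2 b a ∧ lt2 b c)
    (hGH : G ≤ H)
    (r : ℕ) (x : Fin (r + 2) → V)
    (hinc : ∀ i : Fin (r + 1), lt1 (x i.castSucc) (x i.succ))
    (hadj : ∀ i : Fin (r + 1), G.Adj (x i.castSucc) (x i.succ))
    (hmnt : (∀ i : Fin (r + 2), i ≠ 0 → i ≠ Fin.last (r + 1) → lt2 (x 0) (x i)) ∨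
            (∀ i : Fin (r + 2), i ≠ 0 → i ≠ Fin.last (r + 1) →
              lt2 (x (Fin.last (r + 1))) (x i)))
    (hends : lt2 (x 0) (x (Fin.last (r + 1)))) :
    ∀ i : Fin (r + 2), i ≠ 0 → H.Adj (x 0) (x i) := by
  -- Every interior vertex is lt2-above x 0, in both cases of hmnt.
  have hlt : ∀ i : Fin (r + 2), i ≠ 0 → i ≠ Fin.last (r + 1) → lt2 (x 0) (x i) := by
    rcases hmnt with h | h
    · exact h
    · intro i h0 hl
      exact IsTrans.trans _ _ _ hends (h i h0 hl)
  -- Main induction along the path.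
  have main : ∀ k : ℕ, ∀ hk : k + 1 < r + 2,
      H.Adj (x 0) (x ⟨k + 1, hk⟩) ∧ lt1 (x 0) (x ⟨k + 1, hk⟩) := by
    intro k
    induction k with
    | zero =>
      intro hk
      have h1 := hadj ⟨0, Nat.succ_pos _⟩
      have h2 := hinc ⟨0, Nat.succ_pos _⟩
      have e1 : (Fin.castSucc ⟨0, Nat.succ_pos _⟩ : Fin (r + 2)) = 0 := rfl
      have e2 : (Fin.succ ⟨0, Nat.succ_pos _⟩ : Fin (r + 2)) = ⟨0 + 1, hk⟩ := rfl
      rw [e1, e2] at h1 h2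
      exact ⟨hGH h1, h2⟩
    | succ k ih =>
      intro hk
      have hk' : k + 1 < r + 2 := Nat.lt_of_succ_lt hk
      obtain ⟨ihadj, ihlt⟩ := ih hk'
      have hklt : k + 1 < r + 1 := Nat.lt_of_succ_lt_succ hk
      have h1 := hadj ⟨k + 1, hklt⟩
      have h2 := hinc ⟨k + 1, hklt⟩
      have e1 : (Fin.castSucc ⟨k + 1, hklt⟩ : Fin (r + 2)) = ⟨k + 1, hk'⟩ := rfl
      have e2 : (Fin.succ ⟨k + 1, hklt⟩ : Fin (r + 2)) = ⟨k + 1 + 1, hk⟩ := rfl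
      rw [e1, e2] at h1 h2
      have hlt01 : lt1 (x 0) (x ⟨k + 1 + 1, hk⟩) := IsTrans.trans _ _ _ ihlt h2
      refine ⟨?_, hlt01⟩
      by_contra hnot
      have hmag := hmagH _ _ _ ihlt h2 ihadj (hGH h1) hnot
      have hint : lt2 (x 0) (x ⟨k + 1, hk'⟩) := by
        apply hlt
        · simp [Fin.ext_iff]
        · simp [Fin.ext_iff]
          omega
      exact absurd hmag.1 (asymm hint)
  intro i hi0
  obtain ⟨iv, hiv⟩ := i
  rcases iv with _ | k
  · exact absurd rfl hi0
  · exact (main k hiv).1
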